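/- Let P₊ ⊂ Sym²(ℝⁿ) be a closed convex cone contained in the positive semidefinite cone P, with dual cone P⁺, and suppose ℝⁿ = N ⊕ W is an orthogonal direct sum decomposition. Then W is P₊-free (i.e., P₊ ∩ Sym²(W) = {0}) if and only if the orthogonal projection P_N onto N lies in the interior of P⁺. -/

import Mathlib

open Matrix

private lemma trace_transpose_mul_self_nonneg {n : ℕ}
    (M : Matrix (Fin n) (Fin n) ℝ) : 0 ≤ (Mᵀ * M).trace := by
  have : (Mᵀ * M).trace = ∑ j, ∑ i, M i j * M i j := by
    simp [Matrix.trace, Matrix.diag, Matrix.mul_apply, Matrix.transpose_apply]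
  rw [this]
  exact Finset.sum_nonneg fun j _ => Finset.sum_nonneg fun i _ => mul_self_nonneg _

private lemma trace_transpose_mul_self_eq_zero {n : ℕ}
    {M : Matrix (Fin n) (Fin n) ℝ} (h : (Mᵀ * M).trace = 0) : M = 0 := by
  have hsum : ∑ j, ∑ i, M i j * M i j = 0 := by
    have : (Mᵀ * M).trace = ∑ j, ∑ i, M i j * M i j := by
      simp [Matrix.trace, Matrix.diag, Matrix.mul_apply, Matrix.transpose_apply]
    rw [← this]; exact h
  ext i j
  have h1 : ∀ j ∈ Finset.univ, (0:ℝ) ≤ ∑ i, M i j * M i j :=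
    fun j _ => Finset.sum_nonneg fun i _ => mul_self_nonneg _
  have h2 := (Finset.sum_eq_zero_iff_of_nonneg h1).mp hsum j (Finset.mem_univ j)
  have h3 := (Finset.sum_eq_zero_iff_of_nonneg
    (fun i _ => mul_self_nonneg (M i j))).mp h2 i (Finset.mem_univ i)
  simpa using mul_self_eq_zero.mp h3
theorem stmt7 (n : ℕ) (Plow : Set (Matrix (Fin n) (Fin n) ℝ))
    (hclosed : IsClosed Plow) (hconv : Convex ℝ Plow)
    (hcone : ∀ c : ℝ, 0 ≤ c → ∀ A ∈ Plow, c • A ∈ Plow)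
    (hpos : ∀ A ∈ Plow, A.PosSemidef)
    (Pup : Set (Matrix (Fin n) (Fin n) ℝ))
    (hPup : Pup = {B | B.IsSymm ∧ ∀ A ∈ Plow, 0 ≤ (A * B).trace})
    (hInt : intrinsicInterior ℝ Pup =
        {B | B.IsSymm ∧ ∀ A ∈ Plow, A ≠ 0 → 0 < (A * B).trace})
    (Q : Matrix (Fin n) (Fin n) ℝ) (hQsym : Q.IsSymm) (hQidem : Q * Q = Q) :
    (∀ A ∈ Plow, A * Q = 0 → A = 0) ↔ Q ∈ intrinsicInterior ℝ Pup := by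
  rw [hInt]
  constructor
  · intro hfree
    refine ⟨hQsym, ?_⟩
    intro A hA hAne
    have hApsd := hpos A hA
    have hQQ : Qᵀ = Q := hQsym
    obtain ⟨B, hBB, hBsym⟩ : ∃ B : Matrix (Fin n) (Fin n) ℝ, B * B = A ∧ Bᵀ = B := by
      open scoped MatrixOrder in
      exact ⟨CFC.sqrt A, CFC.sqrt_mul_sqrt_self A hApsd.nonneg,
        (CFC.sqrt_nonneg A).posSemidef.1⟩
    have htr : (A * Q).trace = ((B * Q)ᵀ * (B * Q)).trace := by
      have : (B * Q)ᵀ * (B * Q) = Q * A * Q := by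
        rw [Matrix.transpose_mul, hBsym, hQQ]
        calc Q * B * (B * Q) = Q * (B * B) * Q := by
              noncomm_ring
          _ = Q * A * Q := by rw [hBB]
      rw [this]
      calc (A * Q).trace = (A * (Q * Q)).trace := by rw [hQidem]
        _ = ((A * Q) * Q).trace := by rw [Matrix.mul_assoc]
        _ = (Q * (A * Q)).trace := by rw [Matrix.trace_mul_comm]
        _ = (Q * A * Q).trace := by rw [Matrix.mul_assoc]
    rw [htr]
    rcases lt_or_eq_of_le (trace_transpose_mul_self_nonneg (B * Q)) with h | h
    · exact h
    exfalso
    apply hAne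
    apply hfree A hA
    have hBQ : B * Q = 0 := trace_transpose_mul_self_eq_zero h.symm
    calc A * Q = B * (B * Q) := by rw [← Matrix.mul_assoc, hBB]
      _ = 0 := by rw [hBQ, Matrix.mul_zero]
  · rintro ⟨-, hQpos⟩ A hA hAQ
    by_contra hAne
    have := hQpos A hA hAne
    rw [hAQ] at this
    simp at this
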